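/- arXiv:1311.2465 — 4 statements merged into one kernel-verified Lean document; each statement's English description precedes it below -/
import Mathlib

section
/- Let m ≥ 2 and n ≥ 2. In the mixed braid group B_{m,n}, combing a 2-strand cable through a positive crossing of the first two fixed strands gives the same result whether the cable is combed as a single thickened strand or strand by strand; explicitly, the following identity holds: a_2^{-1} · (σ_1^{-1} a_2^{-1} σ_1) · a_1 · (σ_1 a_1 σ_1^{-1}) · a_2 · (σ_1 a_2 σ_1^{-1}) = (a_2^{-1} a_1 a_2) · (σ_1 a_2^{-1} a_1 a_2 σ_1^{-1}). -/
/-- The free-group generator corresponding to the loop generator `a_{i+1}`. -/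
def genA (m n : ℕ) (i : Fin m) : FreeGroup (Fin m ⊕ Fin (n - 1)) :=
  FreeGroup.of (Sum.inl i)

/-- The free-group generator corresponding to the braiding generator `σ_{k+1}`. -/
def genS (m n : ℕ) (k : Fin (n - 1)) : FreeGroup (Fin m ⊕ Fin (n - 1)) :=
  FreeGroup.of (Sum.inr k)

/-- The defining relations of the mixed braid group `B_{m,n}`:
`σ_k σ_j = σ_j σ_k` for `|k-j| > 1`; `σ_k σ_{k+1} σ_k = σ_{k+1} σ_k σ_{k+1}`;
`a_i σ_k = σ_k a_i` for `k ≥ 2`; `a_i σ_1 a_i σ_1 = σ_1 a_i σ_1 a_i`;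
`a_i (σ_1 a_r σ_1⁻¹) = (σ_1 a_r σ_1⁻¹) a_i` for `r < i`.
(Indices of generators are 0-based: `Sum.inl i ↦ a_{i+1}`, `Sum.inr k ↦ σ_{k+1}`.) -/
def mixedRels (m n : ℕ) : Set (FreeGroup (Fin m ⊕ Fin (n - 1))) :=
  {x | ∃ k j : Fin (n - 1), (k : ℕ) + 2 ≤ (j : ℕ) ∧
      x = genS m n k * genS m n j * (genS m n k)⁻¹ * (genS m n j)⁻¹} ∪
  {x | ∃ k j : Fin (n - 1), (k : ℕ) + 1 = (j : ℕ) ∧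
      x = genS m n k * genS m n j * genS m n k *
          (genS m n j)⁻¹ * (genS m n k)⁻¹ * (genS m n j)⁻¹} ∪
  {x | ∃ (i : Fin m) (k : Fin (n - 1)), 1 ≤ (k : ℕ) ∧
      x = genA m n i * genS m n k * (genA m n i)⁻¹ * (genS m n k)⁻¹} ∪
  {x | ∃ (i : Fin m) (k : Fin (n - 1)), (k : ℕ) = 0 ∧
      x = genA m n i * genS m n k * genA m n i * genS m n k *
          (genA m n i)⁻¹ * (genS m n k)⁻¹ * (genA m n i)⁻¹ * (genS m n k)⁻¹} ∪
  {x | ∃ (i r : Fin m) (k : Fin (n - 1)), (r : ℕ) < (i : ℕ) ∧ (k : ℕ) = 0 ∧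
      x = genA m n i * (genS m n k * genA m n r * (genS m n k)⁻¹) *
          (genA m n i)⁻¹ * (genS m n k * genA m n r * (genS m n k)⁻¹)⁻¹}

/-- The mixed braid group `B_{m,n}`. -/
abbrev MixedBraid (m n : ℕ) := PresentedGroup (mixedRels m n)

/-- The loop generator `a_i` (1-based, `1 ≤ i ≤ m`); junk value `1` out of range. -/
def aGen (m n i : ℕ) : MixedBraid m n :=
  if h : 1 ≤ i ∧ i ≤ m then PresentedGroup.of (Sum.inl ⟨i - 1, by omega⟩) else 1

/-- The braiding generator `σ_k` (1-based, `1 ≤ k ≤ n-1`); junk value `1` out of range. -/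
def sGen (m n k : ℕ) : MixedBraid m n :=
  if h : 1 ≤ k ∧ k ≤ n - 1 then PresentedGroup.of (Sum.inr ⟨k - 1, by omega⟩) else 1

/-- `λ_{l,1} := σ_l σ_{l-1} ⋯ σ_1`, with `λ_{0,1} := 1`. -/
def lamD (m n l : ℕ) : MixedBraid m n :=
  ((List.range l).map (fun t => sGen m n (l - t))).prod

/-- `λ_{1,l} := σ_1 σ_2 ⋯ σ_l`, with `λ_{1,0} := 1`. -/
def lamU (m n l : ℕ) : MixedBraid m n :=
  ((List.range l).map (fun t => sGen m n (t + 1))).prod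

/-- Any relator maps to `1` in the presented group. -/
lemma mixed_rel_one (m n : ℕ) {r : FreeGroup (Fin m ⊕ Fin (n - 1))}
    (hr : r ∈ mixedRels m n) : (QuotientGroup.mk r : MixedBraid m n) = 1 :=
  (QuotientGroup.eq_one_iff r).mpr (Subgroup.subset_normalClosure hr)

/-- Combing a 2-strand cable through a positive crossing of the first two fixed
strands gives the same result whether combed as a single thickened strand or
strand by strand. -/
theorem combing_two_strand_cable (m n : ℕ) (hm : 2 ≤ m) (hn : 2 ≤ n) :
    (aGen m n 2)⁻¹ * ((sGen m n 1)⁻¹ * (aGen m n 2)⁻¹ * sGen m n 1) *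
      aGen m n 1 * (sGen m n 1 * aGen m n 1 * (sGen m n 1)⁻¹) *
      aGen m n 2 * (sGen m n 1 * aGen m n 2 * (sGen m n 1)⁻¹) =
    ((aGen m n 2)⁻¹ * aGen m n 1 * aGen m n 2) *
      (sGen m n 1 * (aGen m n 2)⁻¹ * aGen m n 1 * aGen m n 2 * (sGen m n 1)⁻¹) := by
  have h1 : (1:ℕ) ≤ m := by omega
  set i1 : Fin m := ⟨0, by omega⟩ with hi1
  set i2 : Fin m := ⟨1, by omega⟩ with hi2
  set k1 : Fin (n - 1) := ⟨0, by omega⟩ with hk1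
  have ha : aGen m n 1 = PresentedGroup.of (Sum.inl i1) := by
    rw [aGen, dif_pos ⟨le_refl 1, h1⟩]
  have hb : aGen m n 2 = PresentedGroup.of (Sum.inl i2) := by
    rw [aGen, dif_pos ⟨by omega, hm⟩]
  have hs : sGen m n 1 = PresentedGroup.of (Sum.inr k1) := by
    rw [sGen, dif_pos ⟨le_refl 1, by omega⟩]
  rw [ha, hb, hs]
  set a : MixedBraid m n := PresentedGroup.of (Sum.inl i1) with haa
  set b : MixedBraid m n := PresentedGroup.of (Sum.inl i2) with hbb
  set s : MixedBraid m n := PresentedGroup.of (Sum.inr k1) with hss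
  -- relation a_i σ1 a_i σ1 = σ1 a_i σ1 a_i
  have key : ∀ i : Fin m, (PresentedGroup.of (Sum.inl i) : MixedBraid m n) *
      s * PresentedGroup.of (Sum.inl i) * s =
      s * PresentedGroup.of (Sum.inl i) * s * PresentedGroup.of (Sum.inl i) := by
    intro i
    have hmem : genA m n i * genS m n k1 * genA m n i * genS m n k1 *
        (genA m n i)⁻¹ * (genS m n k1)⁻¹ * (genA m n i)⁻¹ * (genS m n k1)⁻¹
        ∈ mixedRels m n := Or.inl (Or.inr ⟨i, k1, rfl, rfl⟩)
    have h := mixed_rel_one m n hmem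
    simp only [genA, genS, QuotientGroup.mk_mul, QuotientGroup.mk_inv] at h
    have h' : (PresentedGroup.of (Sum.inl i) : MixedBraid m n) * s *
        PresentedGroup.of (Sum.inl i) * s * (PresentedGroup.of (Sum.inl i))⁻¹ * s⁻¹ *
        (PresentedGroup.of (Sum.inl i))⁻¹ * s⁻¹ = 1 := h
    rw [← mul_inv_eq_one]
    calc (PresentedGroup.of (Sum.inl i) : MixedBraid m n) * s *
          PresentedGroup.of (Sum.inl i) * s *
          (s * PresentedGroup.of (Sum.inl i) * s * PresentedGroup.of (Sum.inl i))⁻¹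
        = PresentedGroup.of (Sum.inl i) * s * PresentedGroup.of (Sum.inl i) * s *
          (PresentedGroup.of (Sum.inl i))⁻¹ * s⁻¹ * (PresentedGroup.of (Sum.inl i))⁻¹ *
          s⁻¹ := by group
      _ = 1 := h'
  -- relation a_2 commutes with σ1 a_1 σ1⁻¹
  have comm1 : b * (s * a * s⁻¹) = (s * a * s⁻¹) * b := by
    have hmem : genA m n i2 * (genS m n k1 * genA m n i1 * (genS m n k1)⁻¹) *
        (genA m n i2)⁻¹ * (genS m n k1 * genA m n i1 * (genS m n k1)⁻¹)⁻¹
        ∈ mixedRels m n := Or.inr ⟨i2, i1, k1, by simp [hi1, hi2], rfl, rfl⟩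
    have h := mixed_rel_one m n hmem
    simp only [genA, genS, QuotientGroup.mk_mul, QuotientGroup.mk_inv] at h
    have h' : b * (s * a * s⁻¹) * b⁻¹ * (s * a * s⁻¹)⁻¹ = 1 := h
    rw [← mul_inv_eq_one]
    calc b * (s * a * s⁻¹) * ((s * a * s⁻¹) * b)⁻¹
        = b * (s * a * s⁻¹) * b⁻¹ * (s * a * s⁻¹)⁻¹ := by group
      _ = 1 := h'
  have ra : a * s * a * s = s * a * s * a := key i1
  have rb : b * s * b * s = s * b * s * b := key i2
  have hc1 : Commute b (s * a * s⁻¹) := comm1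
  have hc2 : Commute b (s * b * s) := by
    show b * (s * b * s) = (s * b * s) * b
    calc b * (s * b * s) = b * s * b * s := by group
      _ = s * b * s * b := rb
      _ = (s * b * s) * b := by group
  have hc3 : Commute b⁻¹ (s * a * b * s) := by
    have : s * a * b * s = (s * a * s⁻¹) * (s * b * s) := by group
    rw [this]
    exact (hc1.mul_right hc2).inv_left
  calc b⁻¹ * (s⁻¹ * b⁻¹ * s) * a * (s * a * s⁻¹) * b * (s * b * s⁻¹)
      = (b⁻¹ * s⁻¹ * b⁻¹ * s * a) * ((s * a * s⁻¹) * b) * (s * b * s⁻¹) := by group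
    _ = (b⁻¹ * s⁻¹ * b⁻¹ * s * a) * (b * (s * a * s⁻¹)) * (s * b * s⁻¹) := by
        rw [← comm1]
    _ = (b⁻¹ * s⁻¹) * (b⁻¹ * (s * a * b * s)) * (a * b * s⁻¹) := by group
    _ = (b⁻¹ * s⁻¹) * ((s * a * b * s) * b⁻¹) * (a * b * s⁻¹) := by rw [hc3.eq]
    _ = (b⁻¹ * a * b) * (s * b⁻¹ * a * b * s⁻¹) := by group
end

section
/- Let m ≥ 1, n ≥ 1, 1 ≤ j ≤ m and 1 ≤ q ≤ n. In the mixed braid group B_{m,n}, the two algebraic expressions for a positive looping between a q-strand cable and the j-th fixed strand are equal: ∏_{i=0}^{q−1} λ_{i,1} a_j λ_{i,1}^{−1} = ∏_{i=0}^{q−1} λ_{1,(q−1)−i}^{−1} a_j λ_{1,(q−1)−i}, where both products are taken left to right in increasing order of i. -/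
namespace CableAux

/-! ### Abstract group lemmas -/

section Abstract
variable {G : Type*} [Group G]

lemma comm_of {x y : G} (h : x * y * x⁻¹ * y⁻¹ = 1) : x * y = y * x := by
  have h2 : x * y = (x * y * x⁻¹ * y⁻¹) * (y * x) := by group
  rw [h, one_mul] at h2; exact h2

lemma braid_of {x y : G} (h : x * y * x * y⁻¹ * x⁻¹ * y⁻¹ = 1) : x * y * x = y * x * y := by
  have h2 : x * y * x = (x * y * x * y⁻¹ * x⁻¹ * y⁻¹) * (y * x * y) := by group
  rw [h, one_mul] at h2; exact h2

lemma rel4_of {x y : G} (h : x * y * x * y * x⁻¹ * y⁻¹ * x⁻¹ * y⁻¹ = 1) :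
    x * y * x * y = y * x * y * x := by
  have h2 : x * y * x * y = (x * y * x * y * x⁻¹ * y⁻¹ * x⁻¹ * y⁻¹) * (y * x * y * x) := by group
  rw [h, one_mul] at h2; exact h2

lemma braid_step (A s t : G) (hb : s * t * s = t * s * t) (hc : A * t = t * A)
    (hm : A * s * A * s = s * A * s * A) :
    (s * A * s⁻¹) * t * (s * A * s⁻¹) * t = t * (s * A * s⁻¹) * t * (s * A * s⁻¹) := by
  have hct : A * t⁻¹ = t⁻¹ * A := by
    calc A * t⁻¹ = t⁻¹ * (t * A) * t⁻¹ := by group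
      _ = t⁻¹ * (A * t) * t⁻¹ := by rw [hc]
      _ = t⁻¹ * A := by group
  have e1 : s⁻¹ * t * s = t * s * t⁻¹ := by
    calc s⁻¹ * t * s = s⁻¹ * (t * s * t) * t⁻¹ := by group
      _ = s⁻¹ * (s * t * s) * t⁻¹ := by rw [hb]
      _ = t * s * t⁻¹ := by group
  have e2 : t⁻¹ * s⁻¹ * t = s * t⁻¹ * s⁻¹ := by
    calc t⁻¹ * s⁻¹ * t = s * (s * t * s)⁻¹ * t := by group
      _ = s * (t * s * t)⁻¹ * t := by rw [hb]
      _ = s * t⁻¹ * s⁻¹ := by group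
  have b1t : ∀ x : G, s⁻¹ * (t * (s * x)) = t * (s * (t⁻¹ * x)) := fun x => by
    simp only [← mul_assoc]; rw [e1]
  have b1t' : ∀ x : G, t * (s * (t⁻¹ * x)) = s⁻¹ * (t * (s * x)) := fun x => (b1t x).symm
  have c1t : ∀ x : G, A * (t * x) = t * (A * x) := fun x => by
    simp only [← mul_assoc]; rw [hc]
  have c1t' : ∀ x : G, t * (A * x) = A * (t * x) := fun x => (c1t x).symm
  have c2t : ∀ x : G, t⁻¹ * (A * x) = A * (t⁻¹ * x) := fun x => by
    simp only [← mul_assoc]; rw [hct]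
  have c2t' : ∀ x : G, A * (t⁻¹ * x) = t⁻¹ * (A * x) := fun x => (c2t x).symm
  have b2t : ∀ x : G, t⁻¹ * (s⁻¹ * (t * x)) = s * (t⁻¹ * (s⁻¹ * x)) := fun x => by
    simp only [← mul_assoc]; rw [e2]
  have mt : ∀ x : G, A * (s * (A * (s * x))) = s * (A * (s * (A * x))) := fun x => by
    simp only [← mul_assoc]; rw [hm]
  have hbt : ∀ x : G, s * (t * (s * x)) = t * (s * (t * x)) := fun x => by
    simp only [← mul_assoc]; rw [hb]
  have key : ∀ x : G,
      s * (A * (s⁻¹ * (t * (s * (A * (s⁻¹ * (t * x))))))) =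
      t * (s * (A * (s⁻¹ * (t * (s * (A * (s⁻¹ * x))))))) := by
    intro x
    rw [b1t, c1t, c2t, b2t, mt, hbt, c1t', c2t', b1t']
  have h := key 1
  simp only [mul_one] at h
  calc (s * A * s⁻¹) * t * (s * A * s⁻¹) * t
      = s * (A * (s⁻¹ * (t * (s * (A * (s⁻¹ * t)))))) := by group
    _ = t * (s * (A * (s⁻¹ * (t * (s * (A * s⁻¹)))))) := h
    _ = t * (s * A * s⁻¹) * t * (s * A * s⁻¹) := by group

lemma L_step (P A B s : G) (hP : s * P = P * s) (hBP : B * P = P * A)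
    (hm : A * s * A * s = s * A * s * A) :
    P * A * (s * A * s⁻¹) = s⁻¹ * B * s * (P * A) := by
  have hP' : s⁻¹ * P = P * s⁻¹ := by
    calc s⁻¹ * P = s⁻¹ * (P * s) * s⁻¹ := by group
      _ = s⁻¹ * (s * P) * s⁻¹ := by rw [hP]
      _ = P * s⁻¹ := by group
  have key : A * (s * A * s⁻¹) = s⁻¹ * (A * s * A) := by
    calc A * (s * A * s⁻¹) = s⁻¹ * (s * A * s * A) * s⁻¹ := by group
      _ = s⁻¹ * (A * s * A * s) * s⁻¹ := by rw [hm]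
      _ = s⁻¹ * (A * s * A) := by group
  calc P * A * (s * A * s⁻¹) = P * (A * (s * A * s⁻¹)) := by group
    _ = P * (s⁻¹ * (A * s * A)) := by rw [key]
    _ = P * s⁻¹ * (A * s * A) := by group
    _ = s⁻¹ * P * (A * s * A) := by rw [hP']
    _ = s⁻¹ * (P * A) * (s * A) := by group
    _ = s⁻¹ * (B * P) * (s * A) := by rw [hBP]
    _ = s⁻¹ * B * (P * s) * A := by group
    _ = s⁻¹ * B * (s * P) * A := by rw [hP]
    _ = s⁻¹ * B * s * (P * A) := by group

end Abstract
end CableAux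

namespace CableAux
section Rels
variable {m n : ℕ}

lemma mk_rel {r : FreeGroup (Fin m ⊕ Fin (n - 1))} (hr : r ∈ mixedRels m n) :
    PresentedGroup.mk (mixedRels m n) r = 1 :=
  (QuotientGroup.eq_one_iff r).mpr (Subgroup.subset_normalClosure hr)

lemma aGen_eq {j : ℕ} (h1 : 1 ≤ j) (h2 : j ≤ m) :
    aGen m n j = PresentedGroup.mk (mixedRels m n) (genA m n ⟨j - 1, by omega⟩) := by
  rw [aGen, dif_pos ⟨h1, h2⟩]; rfl

lemma sGen_eq {k : ℕ} (h1 : 1 ≤ k) (h2 : k ≤ n - 1) :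
    sGen m n k = PresentedGroup.mk (mixedRels m n) (genS m n ⟨k - 1, by omega⟩) := by
  rw [sGen, dif_pos ⟨h1, h2⟩]; rfl

lemma sGen_out {k : ℕ} (h : ¬(1 ≤ k ∧ k ≤ n - 1)) : sGen m n k = 1 := dif_neg h

lemma aGen_out {j : ℕ} (h : ¬(1 ≤ j ∧ j ≤ m)) : aGen m n j = 1 := dif_neg h

lemma s_comm (m n : ℕ) (k t : ℕ) (hk : 1 ≤ k) (h : k + 2 ≤ t) :
    sGen m n k * sGen m n t = sGen m n t * sGen m n k := by
  by_cases ht : t ≤ n - 1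
  · have hk2 : k ≤ n - 1 := by omega
    have hmem : genS m n ⟨k - 1, by omega⟩ * genS m n ⟨t - 1, by omega⟩ *
        (genS m n ⟨k - 1, by omega⟩)⁻¹ * (genS m n ⟨t - 1, by omega⟩)⁻¹ ∈ mixedRels m n := by
      refine Set.mem_union_left _ (Set.mem_union_left _ (Set.mem_union_left _
        (Set.mem_union_left _ ⟨⟨k - 1, by omega⟩, ⟨t - 1, by omega⟩, ?_, rfl⟩)))
      show k - 1 + 2 ≤ t - 1
      omega
    have h1 := mk_rel hmem
    simp only [map_mul, map_inv] at h1
    rw [sGen_eq hk hk2, sGen_eq (show 1 ≤ t by omega) ht]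
    exact comm_of h1
  · rw [sGen_out (show ¬(1 ≤ t ∧ t ≤ n - 1) by omega)]
    group

lemma s_braid (m n : ℕ) (k : ℕ) (hk : 1 ≤ k) (hk2 : k + 1 ≤ n - 1) :
    sGen m n k * sGen m n (k + 1) * sGen m n k =
    sGen m n (k + 1) * sGen m n k * sGen m n (k + 1) := by
  have hk1 : k ≤ n - 1 := by omega
  have hmem : genS m n ⟨k - 1, by omega⟩ * genS m n ⟨k, by omega⟩ * genS m n ⟨k - 1, by omega⟩ *
      (genS m n ⟨k, by omega⟩)⁻¹ * (genS m n ⟨k - 1, by omega⟩)⁻¹ *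
      (genS m n ⟨k, by omega⟩)⁻¹ ∈ mixedRels m n := by
    refine Set.mem_union_left _ (Set.mem_union_left _ (Set.mem_union_left _
      (Set.mem_union_right _ ⟨⟨k - 1, by omega⟩, ⟨k, by omega⟩, ?_, rfl⟩)))
    show k - 1 + 1 = k
    omega
  have h1 := mk_rel hmem
  simp only [map_mul, map_inv] at h1
  have e2 : k + 1 - 1 = k := by omega
  rw [sGen_eq hk hk1, sGen_eq (show 1 ≤ k + 1 by omega) hk2]
  rw [show (⟨k + 1 - 1, by omega⟩ : Fin (n - 1)) = ⟨k, by omega⟩ from by simp [Fin.ext_iff]]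
  exact braid_of h1

lemma a_s_comm (m n : ℕ) (j k : ℕ) (hk : 2 ≤ k) :
    aGen m n j * sGen m n k = sGen m n k * aGen m n j := by
  by_cases hj : 1 ≤ j ∧ j ≤ m
  · by_cases hks : k ≤ n - 1
    · have hmem : genA m n ⟨j - 1, by omega⟩ * genS m n ⟨k - 1, by omega⟩ *
          (genA m n ⟨j - 1, by omega⟩)⁻¹ * (genS m n ⟨k - 1, by omega⟩)⁻¹ ∈ mixedRels m n := by
        refine Set.mem_union_left _ (Set.mem_union_left _
          (Set.mem_union_right _ ⟨⟨j - 1, by omega⟩, ⟨k - 1, by omega⟩, ?_, rfl⟩))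
        show 1 ≤ k - 1
        omega
      have h1 := mk_rel hmem
      simp only [map_mul, map_inv] at h1
      rw [aGen_eq hj.1 hj.2, sGen_eq (show 1 ≤ k by omega) hks]
      exact comm_of h1
    · rw [sGen_out (show ¬(1 ≤ k ∧ k ≤ n - 1) by omega)]
      group
  · rw [aGen_out hj]
    group

lemma a_s_one (m n : ℕ) (j : ℕ) :
    aGen m n j * sGen m n 1 * aGen m n j * sGen m n 1 =
    sGen m n 1 * aGen m n j * sGen m n 1 * aGen m n j := by
  by_cases hj : 1 ≤ j ∧ j ≤ m
  · by_cases hn1 : 1 ≤ n - 1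
    · have hmem : genA m n ⟨j - 1, by omega⟩ * genS m n ⟨0, by omega⟩ *
          genA m n ⟨j - 1, by omega⟩ * genS m n ⟨0, by omega⟩ *
          (genA m n ⟨j - 1, by omega⟩)⁻¹ * (genS m n ⟨0, by omega⟩)⁻¹ *
          (genA m n ⟨j - 1, by omega⟩)⁻¹ * (genS m n ⟨0, by omega⟩)⁻¹ ∈ mixedRels m n := by
        refine Set.mem_union_left _
          (Set.mem_union_right _ ⟨⟨j - 1, by omega⟩, ⟨0, by omega⟩, rfl, rfl⟩)
      have h1 := mk_rel hmem
      simp only [map_mul, map_inv] at h1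
      rw [aGen_eq hj.1 hj.2, sGen_eq (show (1:ℕ) ≤ 1 by omega) hn1]
      exact rel4_of h1
    · rw [sGen_out (show ¬(1 ≤ 1 ∧ 1 ≤ n - 1) by omega)]
      group
  · rw [aGen_out hj]
    group

end Rels
end CableAux

namespace CableAux
section Main
variable (m n : ℕ)

lemma lamD_zero : lamD m n 0 = 1 := by simp [lamD]

lemma lamU_zero : lamU m n 0 = 1 := by simp [lamU]

lemma lamD_succ (l : ℕ) : lamD m n (l + 1) = sGen m n (l + 1) * lamD m n l := by
  unfold lamD
  rw [List.range_succ_eq_map, List.map_cons, List.prod_cons, List.map_map]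
  congr 1
  congr 1
  apply List.map_congr_left
  intro t _
  simp only [Function.comp_apply]
  congr 1
  omega

lemma lamU_succ (l : ℕ) : lamU m n (l + 1) = lamU m n l * sGen m n (l + 1) := by
  unfold lamU
  rw [List.range_succ, List.map_append, List.prod_append]
  simp

/-- `A_k = λ_{k,1} a_j λ_{k,1}⁻¹`. -/
def Ak (j k : ℕ) : MixedBraid m n := lamD m n k * aGen m n j * (lamD m n k)⁻¹

/-- `B_k = λ_{1,k}⁻¹ a_j λ_{1,k}`. -/
def Bk (j k : ℕ) : MixedBraid m n := (lamU m n k)⁻¹ * aGen m n j * lamU m n k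

lemma Ak_zero (j : ℕ) : Ak m n j 0 = aGen m n j := by simp [Ak, lamD_zero]

lemma Bk_zero (j : ℕ) : Bk m n j 0 = aGen m n j := by simp [Bk, lamU_zero]

lemma Ak_succ (j k : ℕ) :
    Ak m n j (k + 1) = sGen m n (k + 1) * Ak m n j k * (sGen m n (k + 1))⁻¹ := by
  simp only [Ak, lamD_succ]; group

lemma Bk_succ (j k : ℕ) :
    Bk m n j (k + 1) = (sGen m n (k + 1))⁻¹ * Bk m n j k * sGen m n (k + 1) := by
  simp only [Bk, lamU_succ]; group

lemma commute_s_lamD (t : ℕ) : ∀ l : ℕ, l + 2 ≤ t → Commute (sGen m n t) (lamD m n l)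
  | 0, _ => by rw [lamD_zero]; exact Commute.one_right _
  | l + 1, h => by
    rw [lamD_succ]
    exact Commute.mul_right ((s_comm m n (l + 1) t (by omega) (by omega)).symm)
      (commute_s_lamD t l (by omega))

lemma commute_s_a (t j : ℕ) (ht : 2 ≤ t) : Commute (sGen m n t) (aGen m n j) :=
  (a_s_comm m n j t ht).symm

lemma commute_s_Ak (t j k : ℕ) (h : k + 2 ≤ t) : Commute (sGen m n t) (Ak m n j k) := by
  rw [Ak]
  exact Commute.mul_right
    (Commute.mul_right (commute_s_lamD m n t k h) (commute_s_a m n t j (by omega)))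
    (Commute.inv_right (commute_s_lamD m n t k h))

/-- `P_q = A_0 A_1 ⋯ A_{q-1}`. -/
def Pk (j q : ℕ) : MixedBraid m n := ((List.range q).map (fun i => Ak m n j i)).prod

lemma Pk_zero (j : ℕ) : Pk m n j 0 = 1 := by simp [Pk]

lemma Pk_succ (j q : ℕ) : Pk m n j (q + 1) = Pk m n j q * Ak m n j q := by
  unfold Pk
  rw [List.range_succ, List.map_append, List.prod_append]
  simp

lemma commute_s_Pk (t j : ℕ) : ∀ q : ℕ, q + 1 ≤ t → Commute (sGen m n t) (Pk m n j q)
  | 0, _ => by rw [Pk_zero]; exact Commute.one_right _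
  | q + 1, h => by
    rw [Pk_succ]
    exact Commute.mul_right (commute_s_Pk t j q (by omega))
      (commute_s_Ak m n t j q (by omega))

lemma lemM (j : ℕ) : ∀ k : ℕ, k + 1 ≤ n - 1 →
    Ak m n j k * sGen m n (k + 1) * Ak m n j k * sGen m n (k + 1) =
    sGen m n (k + 1) * Ak m n j k * sGen m n (k + 1) * Ak m n j k
  | 0, _ => by rw [Ak_zero]; exact a_s_one m n j
  | k + 1, h => by
    rw [Ak_succ]
    exact braid_step (Ak m n j k) (sGen m n (k + 1)) (sGen m n (k + 1 + 1))
      (s_braid m n (k + 1) (by omega) (by omega))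
      ((commute_s_Ak m n (k + 1 + 1) j k (by omega)).symm.eq)
      (lemM j k (by omega))

lemma lemL (j : ℕ) : ∀ q : ℕ, q ≤ n - 1 →
    Pk m n j q * Ak m n j q = Bk m n j q * Pk m n j q
  | 0, _ => by rw [Pk_zero, Ak_zero, Bk_zero]; group
  | q + 1, h => by
    rw [Pk_succ, Ak_succ, Bk_succ]
    exact L_step (Pk m n j q) (Ak m n j q) (Bk m n j q) (sGen m n (q + 1))
      ((commute_s_Pk m n (q + 1) j q (le_refl _)).eq)
      (lemL j q (by omega)).symm
      (lemM m n j q h)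

lemma aux (j : ℕ) : ∀ q : ℕ, q ≤ n →
    Pk m n j q = ((List.range q).map (fun i => Bk m n j (q - 1 - i))).prod
  | 0, _ => by simp [Pk]
  | q + 1, h => by
    rw [Pk_succ, List.range_succ_eq_map, List.map_cons, List.prod_cons, List.map_map]
    have e : (List.range q).map ((fun i => Bk m n j (q + 1 - 1 - i)) ∘ Nat.succ) =
        (List.range q).map (fun i => Bk m n j (q - 1 - i)) := by
      congr 1
      funext i
      simp only [Function.comp_apply]
      congr 1
      omega
    rw [e, show q + 1 - 1 - 0 = q from by omega]
    rw [← aux j q (by omega)]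
    exact lemL m n j q (by omega)

end Main
end CableAux

/-- The two algebraic expressions for a positive looping between a `q`-strand
cable and the `j`-th fixed strand are equal. -/
theorem positive_cable_looping (m n j q : ℕ) (hm : 1 ≤ m) (hn : 1 ≤ n)
    (hj1 : 1 ≤ j) (hj2 : j ≤ m) (hq1 : 1 ≤ q) (hq2 : q ≤ n) :
    ((List.range q).map (fun i => lamD m n i * aGen m n j * (lamD m n i)⁻¹)).prod =
    ((List.range q).map
      (fun i => (lamU m n (q - 1 - i))⁻¹ * aGen m n j * lamU m n (q - 1 - i))).prod := by
  have h := CableAux.aux m n j q hq2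
  simp only [CableAux.Pk, CableAux.Ak, CableAux.Bk] at h
  exact h
end

section
/- Let m ≥ 1, n ≥ 1, 1 ≤ j ≤ m and 1 ≤ q ≤ n. In the mixed braid group B_{m,n}, the two algebraic expressions for a negative looping between a q-strand cable and the j-th fixed strand are equal: ∏_{i=0}^{q−1} λ_{1,i}^{−1} a_j^{−1} λ_{1,i} = ∏_{i=0}^{q−1} λ_{(q−1)−i,1} a_j^{−1} λ_{(q−1)−i,1}^{−1}, where both products are taken left to right in increasing order of i. -/
namespace NCLaux

variable {m n j : ℕ}

lemma rel_one {r : FreeGroup (Fin m ⊕ Fin (n - 1))} (h : r ∈ mixedRels m n) :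
    PresentedGroup.mk (mixedRels m n) r = 1 :=
  (QuotientGroup.eq_one_iff _).mpr (Subgroup.subset_normalClosure h)

lemma comm_of {x y : MixedBraid m n} (h : x * y * x⁻¹ * y⁻¹ = 1) : x * y = y * x :=
  commutatorElement_eq_one_iff_mul_comm.mp (by rw [commutatorElement_def]; exact h)

lemma sGen_pos {k : ℕ} (h1 : 1 ≤ k) (h2 : k ≤ n - 1) :
    sGen m n k = PresentedGroup.mk (mixedRels m n) (genS m n ⟨k - 1, by omega⟩) := by
  rw [sGen, dif_pos ⟨h1, h2⟩]; rfl

lemma aGen_pos {i : ℕ} (h1 : 1 ≤ i) (h2 : i ≤ m) :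
    aGen m n i = PresentedGroup.mk (mixedRels m n) (genA m n ⟨i - 1, by omega⟩) := by
  rw [aGen, dif_pos ⟨h1, h2⟩]; rfl

/-- far commutation of braiding generators -/
lemma sS_comm (k l : ℕ) (h : k + 2 ≤ l) :
    sGen m n k * sGen m n l = sGen m n l * sGen m n k := by
  by_cases hk : 1 ≤ k ∧ k ≤ n - 1
  · by_cases hl : 1 ≤ l ∧ l ≤ n - 1
    · rw [sGen_pos hk.1 hk.2, sGen_pos hl.1 hl.2]
      apply comm_of
      have hmem : genS m n ⟨k - 1, by omega⟩ * genS m n ⟨l - 1, by omega⟩ *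
          (genS m n ⟨k - 1, by omega⟩)⁻¹ * (genS m n ⟨l - 1, by omega⟩)⁻¹ ∈ mixedRels m n := by
        refine Or.inl (Or.inl (Or.inl (Or.inl ⟨⟨k - 1, by omega⟩, ⟨l - 1, by omega⟩, ?_, rfl⟩)))
        show k - 1 + 2 ≤ l - 1; omega
      simpa [map_mul, map_inv] using rel_one hmem
    · simp [sGen, dif_neg hl]
  · simp [sGen, dif_neg hk]

/-- braid relation -/
lemma braid (k : ℕ) (h1 : 1 ≤ k) (h2 : k + 1 ≤ n - 1) :
    sGen m n k * sGen m n (k + 1) * sGen m n k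
      = sGen m n (k + 1) * sGen m n k * sGen m n (k + 1) := by
  rw [sGen_pos h1 (by omega), sGen_pos (k := k + 1) (by omega) h2]
  set a := PresentedGroup.mk (mixedRels m n) (genS m n ⟨k - 1, by omega⟩) with ha
  set b := PresentedGroup.mk (mixedRels m n) (genS m n ⟨k + 1 - 1, by omega⟩) with hb
  have hmem : genS m n ⟨k - 1, by omega⟩ * genS m n ⟨k + 1 - 1, by omega⟩ *
      genS m n ⟨k - 1, by omega⟩ * (genS m n ⟨k + 1 - 1, by omega⟩)⁻¹ *
      (genS m n ⟨k - 1, by omega⟩)⁻¹ * (genS m n ⟨k + 1 - 1, by omega⟩)⁻¹ ∈ mixedRels m n := by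
    refine Or.inl (Or.inl (Or.inl (Or.inr ⟨⟨k - 1, by omega⟩, ⟨k + 1 - 1, by omega⟩, ?_, rfl⟩)))
    show k - 1 + 1 = k + 1 - 1; omega
  have h : a * b * a * b⁻¹ * a⁻¹ * b⁻¹ = 1 := by
    simpa [map_mul, map_inv, ha, hb] using rel_one hmem
  calc a * b * a = (a * b * a * b⁻¹ * a⁻¹ * b⁻¹) * (b * a * b) := by group
    _ = 1 * (b * a * b) := by rw [h]
    _ = b * a * b := one_mul _

/-- a_i commutes with σ_k for k ≥ 2 -/
lemma aS_comm (i k : ℕ) (hk : 2 ≤ k) :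
    aGen m n i * sGen m n k = sGen m n k * aGen m n i := by
  by_cases hi : 1 ≤ i ∧ i ≤ m
  · by_cases hkr : 1 ≤ k ∧ k ≤ n - 1
    · rw [aGen_pos hi.1 hi.2, sGen_pos hkr.1 hkr.2]
      apply comm_of
      have hmem : genA m n ⟨i - 1, by omega⟩ * genS m n ⟨k - 1, by omega⟩ *
          (genA m n ⟨i - 1, by omega⟩)⁻¹ * (genS m n ⟨k - 1, by omega⟩)⁻¹ ∈ mixedRels m n := by
        refine Or.inl (Or.inl (Or.inr ⟨⟨i - 1, by omega⟩, ⟨k - 1, by omega⟩, ?_, rfl⟩))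
        show 1 ≤ k - 1; omega
      simpa [map_mul, map_inv] using rel_one hmem
    · simp [sGen, dif_neg hkr]
  · simp [aGen, dif_neg hi]

/-- the mixed relation a σ₁ a σ₁ = σ₁ a σ₁ a -/
lemma rel4 (i : ℕ) :
    aGen m n i * sGen m n 1 * aGen m n i * sGen m n 1
      = sGen m n 1 * aGen m n i * sGen m n 1 * aGen m n i := by
  by_cases hi : 1 ≤ i ∧ i ≤ m
  · by_cases hkr : (1 : ℕ) ≤ n - 1
    · rw [aGen_pos hi.1 hi.2, sGen_pos le_rfl hkr]
      set a := PresentedGroup.mk (mixedRels m n) (genA m n ⟨i - 1, by omega⟩) with ha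
      set s := PresentedGroup.mk (mixedRels m n) (genS m n ⟨1 - 1, by omega⟩) with hs
      have hmem : genA m n ⟨i - 1, by omega⟩ * genS m n ⟨1 - 1, by omega⟩ *
          genA m n ⟨i - 1, by omega⟩ * genS m n ⟨1 - 1, by omega⟩ *
          (genA m n ⟨i - 1, by omega⟩)⁻¹ * (genS m n ⟨1 - 1, by omega⟩)⁻¹ *
          (genA m n ⟨i - 1, by omega⟩)⁻¹ * (genS m n ⟨1 - 1, by omega⟩)⁻¹ ∈ mixedRels m n := by
        exact Or.inl (Or.inr ⟨⟨i - 1, by omega⟩, ⟨1 - 1, by omega⟩, rfl, rfl⟩)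
      have h : a * s * a * s * a⁻¹ * s⁻¹ * a⁻¹ * s⁻¹ = 1 := by
        simpa [map_mul, map_inv, ha, hs] using rel_one hmem
      calc a * s * a * s
          = (a * s * a * s * a⁻¹ * s⁻¹ * a⁻¹ * s⁻¹) * (s * a * s * a) := by group
        _ = 1 * (s * a * s * a) := by rw [h]
        _ = s * a * s * a := one_mul _
    · have : sGen m n 1 = 1 := by rw [sGen, dif_neg (by omega)]
      rw [this]; group
  · have : aGen m n i = 1 := by rw [aGen, dif_neg hi]
    rw [this]; group

end NCLaux

namespace NCLaux

variable {m n j : ℕ}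

lemma map_shift {β : Type*} (f g : ℕ → β) (q : ℕ) (h : ∀ i, f (i + 1) = g i) :
    (List.range (q + 1)).map f = f 0 :: (List.range q).map g := by
  rw [List.range_succ_eq_map, List.map_cons, List.map_map]
  exact congrArg _ (List.map_congr_left fun a _ => h a)

lemma lamD_zero : lamD m n 0 = 1 := rfl

lemma lamU_zero : lamU m n 0 = 1 := rfl

lemma lamD_succ (l : ℕ) : lamD m n (l + 1) = sGen m n (l + 1) * lamD m n l := by
  unfold lamD
  rw [map_shift (fun t => sGen m n (l + 1 - t)) (fun t => sGen m n (l - t)) l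
    (fun i => congrArg (sGen m n) (by omega)), List.prod_cons]
  norm_num

lemma lamU_succ (l : ℕ) : lamU m n (l + 1) = lamU m n l * sGen m n (l + 1) := by
  unfold lamU
  rw [List.range_succ, List.map_append, List.prod_append, List.map_singleton,
    List.prod_singleton]

/-- `v_l = λ_{l,1} a_j⁻¹ λ_{l,1}⁻¹` -/
def vv (m n j l : ℕ) : MixedBraid m n := lamD m n l * (aGen m n j)⁻¹ * (lamD m n l)⁻¹

/-- `u_l = λ_{1,l}⁻¹ a_j⁻¹ λ_{1,l}` -/
def uu (m n j l : ℕ) : MixedBraid m n := (lamU m n l)⁻¹ * (aGen m n j)⁻¹ * lamU m n l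

def CC (m n j q : ℕ) : MixedBraid m n :=
  ((List.range q).map (fun i => vv m n j (q - 1 - i))).prod

lemma vv_zero : vv m n j 0 = (aGen m n j)⁻¹ := by
  rw [vv, lamD_zero]; group

lemma uu_zero : uu m n j 0 = (aGen m n j)⁻¹ := by
  rw [uu, lamU_zero]; group

lemma vv_succ (l : ℕ) :
    vv m n j (l + 1) = sGen m n (l + 1) * vv m n j l * (sGen m n (l + 1))⁻¹ := by
  rw [vv, vv, lamD_succ]; group

lemma uu_succ (l : ℕ) :
    uu m n j (l + 1) = (sGen m n (l + 1))⁻¹ * uu m n j l * sGen m n (l + 1) := by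
  rw [uu, uu, lamU_succ]; group

lemma CC_zero : CC m n j 0 = 1 := rfl

lemma CC_succ (q : ℕ) : CC m n j (q + 1) = vv m n j q * CC m n j q := by
  rw [CC, CC, map_shift (fun i => vv m n j (q + 1 - 1 - i)) (fun i => vv m n j (q - 1 - i)) q
    (fun i => congrArg (vv m n j) (by omega)), List.prod_cons]
  norm_num

lemma aInv_comm (k : ℕ) (hk : 2 ≤ k) : Commute ((aGen m n j)⁻¹) (sGen m n k) :=
  Commute.inv_left (aS_comm j k hk)

lemma vv_comm (l s : ℕ) (h : l + 2 ≤ s) : Commute (vv m n j l) (sGen m n s) := by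
  induction l with
  | zero => rw [vv_zero]; exact aInv_comm s (by omega)
  | succ p ih =>
    rw [vv_succ]
    have c1 : Commute (sGen m n (p + 1)) (sGen m n s) := sS_comm (p + 1) s (by omega)
    exact (c1.mul_left (ih (by omega))).mul_left c1.inv_left

end NCLaux

namespace NCLaux

variable {m n j : ℕ}

/-- base case: `A σ₁⁻¹ A σ₁ = σ₁ A σ₁⁻¹ A` for `A = a_j⁻¹`. -/
lemma Mbase :
    vv m n j 0 * (sGen m n 1)⁻¹ * vv m n j 0 * sGen m n 1
      = sGen m n 1 * vv m n j 0 * (sGen m n 1)⁻¹ * vv m n j 0 := by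
  rw [vv_zero]
  set a := aGen m n j
  set s := sGen m n 1
  have h : a * s * a * s = s * a * s * a := rel4 j
  have hinv : s⁻¹ * a⁻¹ * s⁻¹ * a⁻¹ = a⁻¹ * s⁻¹ * a⁻¹ * s⁻¹ := by
    calc s⁻¹ * a⁻¹ * s⁻¹ * a⁻¹ = (a * s * a * s)⁻¹ := by group
      _ = (s * a * s * a)⁻¹ := by rw [h]
      _ = a⁻¹ * s⁻¹ * a⁻¹ * s⁻¹ := by group
  calc a⁻¹ * s⁻¹ * a⁻¹ * s = s * (s⁻¹ * a⁻¹ * s⁻¹ * a⁻¹) * s := by group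
    _ = s * (a⁻¹ * s⁻¹ * a⁻¹ * s⁻¹) * s := by rw [hinv]
    _ = s * a⁻¹ * s⁻¹ * a⁻¹ := by group

/-- key commutation lemma `M(l)`. -/
lemma Mlem : ∀ l : ℕ, l + 1 ≤ n - 1 →
    vv m n j l * (sGen m n (l + 1))⁻¹ * vv m n j l * sGen m n (l + 1)
      = sGen m n (l + 1) * vv m n j l * (sGen m n (l + 1))⁻¹ * vv m n j l := by
  intro l
  induction l with
  | zero => intro _; exact Mbase
  | succ p ih =>
    intro hr
    set t := sGen m n (p + 1) with ht
    set s := sGen m n (p + 2) with hs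
    set w := vv m n j p with hw
    have hb : t * s * t = s * t * s := braid (p + 1) (by omega) (by omega)
    have cw : Commute w s := vv_comm p (p + 2) le_rfl
    have cw1 : w * s = s * w := cw.eq
    have cw2 : s⁻¹ * w = w * s⁻¹ := (cw.symm.inv_left).eq
    have IH : w * t⁻¹ * w * t = t * w * t⁻¹ * w := ih (by omega)
    have d1 : t⁻¹ * s * t = s * t * s⁻¹ := by
      calc t⁻¹ * s * t = t⁻¹ * (s * t * s) * s⁻¹ := by group
        _ = t⁻¹ * (t * s * t) * s⁻¹ := by rw [← hb]
        _ = s * t * s⁻¹ := by group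
    have c1 : t⁻¹ * s⁻¹ * t = s * t⁻¹ * s⁻¹ := by
      calc t⁻¹ * s⁻¹ * t = (t⁻¹ * s * t)⁻¹ := by group
        _ = (s * t * s⁻¹)⁻¹ := by rw [d1]
        _ = s * t⁻¹ * s⁻¹ := by group
    have d2 : s⁻¹ * t * s = t * s * t⁻¹ := by
      calc s⁻¹ * t * s = s⁻¹ * (t * s * t) * t⁻¹ := by group
        _ = s⁻¹ * (s * t * s) * t⁻¹ := by rw [hb]
        _ = t * s * t⁻¹ := by group
    have c2 : s⁻¹ * t⁻¹ * s = t * s⁻¹ * t⁻¹ := by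
      calc s⁻¹ * t⁻¹ * s = (s⁻¹ * t * s)⁻¹ := by group
        _ = (t * s * t⁻¹)⁻¹ := by rw [d2]
        _ = t * s⁻¹ * t⁻¹ := by group
    rw [vv_succ]
    show t * w * t⁻¹ * s⁻¹ * (t * w * t⁻¹) * s = s * (t * w * t⁻¹) * s⁻¹ * (t * w * t⁻¹)
    calc t * w * t⁻¹ * s⁻¹ * (t * w * t⁻¹) * s
        = t * w * (t⁻¹ * s⁻¹ * t) * w * (t⁻¹ * s) := by group
      _ = t * w * (s * t⁻¹ * s⁻¹) * w * (t⁻¹ * s) := by rw [c1]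
      _ = t * (w * s) * t⁻¹ * (s⁻¹ * w) * (t⁻¹ * s) := by group
      _ = t * (s * w) * t⁻¹ * (w * s⁻¹) * (t⁻¹ * s) := by rw [cw1, cw2]
      _ = t * s * (w * t⁻¹ * w) * (s⁻¹ * t⁻¹ * s) := by group
      _ = t * s * (w * t⁻¹ * w) * (t * s⁻¹ * t⁻¹) := by rw [c2]
      _ = t * s * (w * t⁻¹ * w * t) * (s⁻¹ * t⁻¹) := by group
      _ = t * s * (t * w * t⁻¹ * w) * (s⁻¹ * t⁻¹) := by rw [IH]
      _ = (t * s * t) * (w * t⁻¹ * w) * (s⁻¹ * t⁻¹) := by group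
      _ = (s * t * s) * (w * t⁻¹ * w) * (s⁻¹ * t⁻¹) := by rw [hb]
      _ = s * t * (s * w) * t⁻¹ * (w * s⁻¹) * t⁻¹ := by group
      _ = s * t * (w * s) * t⁻¹ * (s⁻¹ * w) * t⁻¹ := by rw [← cw1, ← cw2]
      _ = s * t * w * (s * t⁻¹ * s⁻¹) * w * t⁻¹ := by group
      _ = s * t * w * (t⁻¹ * s⁻¹ * t) * w * t⁻¹ := by rw [← c1]
      _ = s * (t * w * t⁻¹) * s⁻¹ * (t * w * t⁻¹) := by group

/-- The central lemma: `C_q u_q = v_q C_q`. -/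
lemma keylem : ∀ q : ℕ, q ≤ n - 1 →
    CC m n j q * uu m n j q = vv m n j q * CC m n j q := by
  intro q
  induction q with
  | zero => intro _; rw [CC_zero, uu_zero, vv_zero, one_mul, mul_one]
  | succ p ih =>
    intro hr
    have hC : Commute (CC m n j p) (sGen m n (p + 1)) := by
      apply Commute.list_prod_left
      intro x hx
      simp only [List.mem_map, List.mem_range] at hx
      obtain ⟨i, _, rfl⟩ := hx
      exact vv_comm (p - 1 - i) (p + 1) (by omega)
    rw [CC_succ, uu_succ, vv_succ]
    set s := sGen m n (p + 1)
    set w := vv m n j p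
    set C := CC m n j p
    have hC1 : C * s⁻¹ = s⁻¹ * C := hC.inv_right.eq
    have hC2 : C * s = s * C := hC.eq
    have hM : w * s⁻¹ * w * s = s * w * s⁻¹ * w := Mlem p hr
    calc w * C * (s⁻¹ * uu m n j p * s)
        = w * (C * s⁻¹) * uu m n j p * s := by group
      _ = w * (s⁻¹ * C) * uu m n j p * s := by rw [hC1]
      _ = w * s⁻¹ * (C * uu m n j p) * s := by group
      _ = w * s⁻¹ * (w * C) * s := by rw [ih (by omega)]
      _ = w * s⁻¹ * w * (C * s) := by group
      _ = w * s⁻¹ * w * (s * C) := by rw [hC2]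
      _ = (w * s⁻¹ * w * s) * C := by group
      _ = (s * w * s⁻¹ * w) * C := by rw [hM]
      _ = s * w * s⁻¹ * (w * C) := by group

/-- main identity -/
lemma main : ∀ q : ℕ, q ≤ n →
    ((List.range q).map (fun i => uu m n j i)).prod = CC m n j q := by
  intro q
  induction q with
  | zero => intro _; rfl
  | succ p ih =>
    intro hr
    rw [List.range_succ, List.map_append, List.prod_append, List.map_singleton,
      List.prod_singleton, ih (by omega), CC_succ]
    exact keylem p (by omega)

end NCLaux

/-- The two algebraic expressions for a negative looping between a `q`-strand
cable and the `j`-th fixed strand are equal. -/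
theorem negative_cable_looping (m n j q : ℕ) (hm : 1 ≤ m) (hn : 1 ≤ n)
    (hj1 : 1 ≤ j) (hj2 : j ≤ m) (hq1 : 1 ≤ q) (hq2 : q ≤ n) :
    ((List.range q).map
      (fun i => (lamU m n i)⁻¹ * (aGen m n j)⁻¹ * lamU m n i)).prod =
    ((List.range q).map
      (fun i => lamD m n (q - 1 - i) * (aGen m n j)⁻¹ * (lamD m n (q - 1 - i))⁻¹)).prod := by
  exact NCLaux.main (m := m) (n := n) (j := j) q hq2
end

section
/- (Combing and cabling commute, general q-strand cable) Let m ≥ 2, n ≥ 1, 1 ≤ k ≤ m−1 and 1 ≤ q ≤ n. In the mixed braid group B_{m,n}, set C_j := ∏_{l=0}^{q−1} λ_{l,1} a_j λ_{l,1}^{−1} (the positive looping of a q-strand cable around the j-th fixed strand, product left to right in increasing l). Then combing the cable as a single thickened strand equals combing its strands one by one: C_{k+1}^{−1} C_k C_{k+1} = ∏_{l=0}^{q−1} λ_{l,1} (a_{k+1}^{−1} a_k a_{k+1}) λ_{l,1}^{−1}. -/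
section GroupHelpers

variable {G : Type*} [Group G]

lemma comm_of_rel {X Y : G} (h : X * Y * X⁻¹ * Y⁻¹ = 1) : Commute X Y := by
  show X * Y = Y * X
  rw [mul_inv_eq_one] at h
  rwa [mul_inv_eq_iff_eq_mul] at h

lemma conj_comm {c x y : G} (h : Commute (c * x * c⁻¹) y) : Commute x (c⁻¹ * y * c) := by
  show x * (c⁻¹ * y * c) = (c⁻¹ * y * c) * x
  calc x * (c⁻¹ * y * c) = c⁻¹ * ((c * x * c⁻¹) * y) * c := by group
    _ = c⁻¹ * (y * (c * x * c⁻¹)) * c := by rw [h.eq]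
    _ = (c⁻¹ * y * c) * x := by group

lemma comm_conj_of {c w y : G} (hc : Commute y c) (h : Commute w y) :
    Commute (c * w * c⁻¹) y :=
  (hc.symm.mul_left h).mul_left hc.symm.inv_left

lemma key2 (a b s : G) (hb : b * s * b * s = s * b * s * b)
    (h5 : Commute (s * a * s⁻¹) b) : Commute (s * b * s⁻¹) (b⁻¹ * a * b) := by
  have hQ : (s * b) * (s * b * s⁻¹) * (s * b)⁻¹ = b := by
    calc (s * b) * (s * b * s⁻¹) * (s * b)⁻¹
        = (s * b * s * b) * (s⁻¹ * b⁻¹ * s⁻¹) := by group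
      _ = (b * s * b * s) * (s⁻¹ * b⁻¹ * s⁻¹) := by rw [← hb]
      _ = b := by group
  have h6 : Commute ((s * b) * (s * b * s⁻¹) * (s * b)⁻¹) (s * a * s⁻¹) := by
    rw [hQ]; exact h5.symm
  have h7 := conj_comm h6
  have h8 : b⁻¹ * a * b = (s * b)⁻¹ * (s * a * s⁻¹) * (s * b) := by group
  rw [h8]; exact h7

lemma prod_conj (q : ℕ) (A B : ℕ → G)
    (h1 : ∀ l p : ℕ, l < p → p < q → Commute (A p) (B l))
    (h2 : ∀ l p : ℕ, l < p → p < q → Commute (B p) ((B l)⁻¹ * A l * B l)) :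
    (((List.range q).map B).prod)⁻¹ * ((List.range q).map A).prod *
      ((List.range q).map B).prod =
    ((List.range q).map (fun l => (B l)⁻¹ * A l * B l)).prod := by
  induction q with
  | zero => simp
  | succ t IH =>
    have hrec := IH (fun l p hlp hp => h1 l p hlp (by omega))
      (fun l p hlp hp => h2 l p hlp (by omega))
    rw [List.range_succ, List.map_append, List.map_append, List.map_append,
      List.prod_append, List.prod_append, List.prod_append]
    simp only [List.map_cons, List.map_nil, List.prod_cons, List.prod_nil, mul_one]
    set Pa := ((List.range t).map A).prod with hPa
    set Pb := ((List.range t).map B).prod with hPb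
    set Pe := ((List.range t).map (fun l => (B l)⁻¹ * A l * B l)).prod with hPe
    have hA : Commute (A t) Pb := by
      refine Commute.list_prod_right _ _ ?_
      intro z hz
      rw [List.mem_map] at hz
      obtain ⟨l, hl, rfl⟩ := hz
      exact h1 l t (List.mem_range.mp hl) (Nat.lt_succ_self t)
    have hB : Commute (B t) Pe := by
      refine Commute.list_prod_right _ _ ?_
      intro z hz
      rw [List.mem_map] at hz
      obtain ⟨l, hl, rfl⟩ := hz
      exact h2 l t (List.mem_range.mp hl) (Nat.lt_succ_self t)
    calc (Pb * B t)⁻¹ * (Pa * A t) * (Pb * B t)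
        = (B t)⁻¹ * ((Pb⁻¹ * Pa) * (A t * Pb)) * B t := by group
      _ = (B t)⁻¹ * ((Pb⁻¹ * Pa) * (Pb * A t)) * B t := by rw [hA.eq]
      _ = (B t)⁻¹ * (Pb⁻¹ * Pa * Pb) * (A t * B t) := by group
      _ = (B t)⁻¹ * Pe * (A t * B t) := by rw [hrec]
      _ = (Pe * (B t)⁻¹) * (A t * B t) := by rw [hB.inv_left.eq]
      _ = Pe * ((B t)⁻¹ * A t * B t) := by group

end GroupHelpers

section MixedLemmas

variable {m n : ℕ}

lemma mk_rel_one {r : FreeGroup (Fin m ⊕ Fin (n - 1))} (h : r ∈ mixedRels m n) :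
    PresentedGroup.mk (mixedRels m n) r = 1 :=
  (QuotientGroup.eq_one_iff r).mpr (Subgroup.subset_normalClosure h)

lemma mk_genS {t : ℕ} (h1 : 1 ≤ t) (h2 : t ≤ n - 1) (hp : t - 1 < n - 1) :
    PresentedGroup.mk (mixedRels m n) (genS m n ⟨t - 1, hp⟩) = sGen m n t := by
  rw [sGen, dif_pos ⟨h1, h2⟩]; rfl

lemma mk_genA {i : ℕ} (h1 : 1 ≤ i) (h2 : i ≤ m) (hp : i - 1 < m) :
    PresentedGroup.mk (mixedRels m n) (genA m n ⟨i - 1, hp⟩) = aGen m n i := by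
  rw [aGen, dif_pos ⟨h1, h2⟩]; rfl

lemma sGen_out {t : ℕ} (h : ¬(1 ≤ t ∧ t ≤ n - 1)) : sGen m n t = 1 := dif_neg h

lemma aGen_out {i : ℕ} (h : ¬(1 ≤ i ∧ i ≤ m)) : aGen m n i = 1 := dif_neg h

lemma lamD_zero : lamD m n 0 = 1 := rfl

lemma lamD_succ (l : ℕ) : lamD m n (l + 1) = sGen m n (l + 1) * lamD m n l := by
  rw [lamD, lamD, List.range_succ_eq_map, List.map_cons, List.prod_cons, List.map_map]
  congr 2
  exact List.map_congr_left fun a _ => by simp [Function.comp, Nat.succ_sub_succ]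

lemma sGen_far {j t : ℕ} (h1 : 1 ≤ j) (h2 : j + 2 ≤ t) :
    Commute (sGen m n j) (sGen m n t) := by
  by_cases ht : t ≤ n - 1
  · have hj2 : j ≤ n - 1 := by omega
    have hpj : j - 1 < n - 1 := by omega
    have hpt : t - 1 < n - 1 := by omega
    have hmem : genS m n ⟨j - 1, hpj⟩ * genS m n ⟨t - 1, hpt⟩ *
        (genS m n ⟨j - 1, hpj⟩)⁻¹ * (genS m n ⟨t - 1, hpt⟩)⁻¹ ∈ mixedRels m n :=
      Or.inl (Or.inl (Or.inl (Or.inl ⟨⟨j - 1, hpj⟩, ⟨t - 1, hpt⟩, by show j - 1 + 2 ≤ t - 1; omega, rfl⟩)))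
    have h := mk_rel_one hmem
    simp only [map_mul, map_inv] at h
    rw [mk_genS h1 hj2, mk_genS (by omega) ht] at h
    exact comm_of_rel h
  · rw [sGen_out (fun hh => ht hh.2)]
    exact Commute.one_right _

lemma braid_adj {j : ℕ} (h1 : 1 ≤ j) (h2 : j + 1 ≤ n - 1) :
    sGen m n j * sGen m n (j + 1) * sGen m n j =
      sGen m n (j + 1) * sGen m n j * sGen m n (j + 1) := by
  have hpj : j - 1 < n - 1 := by omega
  have hpt : j + 1 - 1 < n - 1 := by omega
  have hmem : genS m n ⟨j - 1, hpj⟩ * genS m n ⟨j + 1 - 1, hpt⟩ * genS m n ⟨j - 1, hpj⟩ *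
      (genS m n ⟨j + 1 - 1, hpt⟩)⁻¹ * (genS m n ⟨j - 1, hpj⟩)⁻¹ *
      (genS m n ⟨j + 1 - 1, hpt⟩)⁻¹ ∈ mixedRels m n :=
    Or.inl (Or.inl (Or.inl (Or.inr ⟨⟨j - 1, hpj⟩, ⟨j + 1 - 1, hpt⟩, by show j - 1 + 1 = j + 1 - 1; omega, rfl⟩)))
  have h := mk_rel_one hmem
  simp only [map_mul, map_inv] at h
  rw [mk_genS h1 (by omega), mk_genS (by omega) h2] at h
  rw [mul_inv_eq_one] at h
  rw [mul_inv_eq_iff_eq_mul] at h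
  rwa [mul_inv_eq_iff_eq_mul] at h

lemma aGen_sGen_comm (i : ℕ) {j : ℕ} (hj : 2 ≤ j) :
    Commute (aGen m n i) (sGen m n j) := by
  by_cases hi : 1 ≤ i ∧ i ≤ m
  · by_cases hjj : j ≤ n - 1
    · have hpi : i - 1 < m := by omega
      have hpj : j - 1 < n - 1 := by omega
      have hmem : genA m n ⟨i - 1, hpi⟩ * genS m n ⟨j - 1, hpj⟩ *
          (genA m n ⟨i - 1, hpi⟩)⁻¹ * (genS m n ⟨j - 1, hpj⟩)⁻¹ ∈ mixedRels m n :=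
        Or.inl (Or.inl (Or.inr ⟨⟨i - 1, hpi⟩, ⟨j - 1, hpj⟩, by show 1 ≤ j - 1; omega, rfl⟩))
      have h := mk_rel_one hmem
      simp only [map_mul, map_inv] at h
      rw [mk_genS (by omega) hjj, mk_genA hi.1 hi.2] at h
      exact comm_of_rel h
    · rw [sGen_out (fun hh => hjj hh.2)]
      exact Commute.one_right _
  · rw [aGen_out hi]
    exact Commute.one_left _

lemma r4_rel {i : ℕ} (h1 : 1 ≤ i) (h2 : i ≤ m) (hn : 2 ≤ n) :
    aGen m n i * sGen m n 1 * aGen m n i * sGen m n 1 =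
      sGen m n 1 * aGen m n i * sGen m n 1 * aGen m n i := by
  have hpi : i - 1 < m := by omega
  have hp0 : 1 - 1 < n - 1 := by omega
  have hmem : genA m n ⟨i - 1, hpi⟩ * genS m n ⟨1 - 1, hp0⟩ * genA m n ⟨i - 1, hpi⟩ *
      genS m n ⟨1 - 1, hp0⟩ * (genA m n ⟨i - 1, hpi⟩)⁻¹ * (genS m n ⟨1 - 1, hp0⟩)⁻¹ *
      (genA m n ⟨i - 1, hpi⟩)⁻¹ * (genS m n ⟨1 - 1, hp0⟩)⁻¹ ∈ mixedRels m n :=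
    Or.inl (Or.inr ⟨⟨i - 1, hpi⟩, ⟨1 - 1, hp0⟩, rfl, rfl⟩)
  have h := mk_rel_one hmem
  simp only [map_mul, map_inv] at h
  rw [mk_genS le_rfl (by omega), mk_genA h1 h2] at h
  rw [mul_inv_eq_one] at h
  rw [mul_inv_eq_iff_eq_mul] at h
  rw [mul_inv_eq_iff_eq_mul] at h
  rwa [mul_inv_eq_iff_eq_mul] at h

lemma r5_rel {i r : ℕ} (hr : 1 ≤ r) (hri : r < i) (hi : i ≤ m) (hn : 2 ≤ n) :
    Commute (aGen m n i) (sGen m n 1 * aGen m n r * (sGen m n 1)⁻¹) := by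
  have hpi : i - 1 < m := by omega
  have hpr : r - 1 < m := by omega
  have hp0 : 1 - 1 < n - 1 := by omega
  have hmem : genA m n ⟨i - 1, hpi⟩ *
      (genS m n ⟨1 - 1, hp0⟩ * genA m n ⟨r - 1, hpr⟩ * (genS m n ⟨1 - 1, hp0⟩)⁻¹) *
      (genA m n ⟨i - 1, hpi⟩)⁻¹ *
      (genS m n ⟨1 - 1, hp0⟩ * genA m n ⟨r - 1, hpr⟩ * (genS m n ⟨1 - 1, hp0⟩)⁻¹)⁻¹ ∈
      mixedRels m n :=
    Or.inr ⟨⟨i - 1, hpi⟩, ⟨r - 1, hpr⟩, ⟨1 - 1, hp0⟩, by show r - 1 < i - 1; omega, rfl, rfl⟩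
  have h := mk_rel_one hmem
  simp only [map_mul, map_inv] at h
  rw [mk_genS le_rfl (by omega), mk_genA (by omega) hi, mk_genA hr (by omega)] at h
  exact comm_of_rel h

lemma lamD_comm_sGen {l t : ℕ} (h : l + 2 ≤ t) :
    Commute (lamD m n l) (sGen m n t) := by
  induction l with
  | zero => rw [lamD_zero]; exact Commute.one_left _
  | succ u IH =>
    rw [lamD_succ]
    exact (sGen_far (by omega) (by omega)).mul_left (IH (by omega))

lemma conj_comm_sGen (x : MixedBraid m n)
    (Hx : ∀ j : ℕ, 2 ≤ j → Commute x (sGen m n j)) {l t : ℕ} (h : l + 2 ≤ t) :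
    Commute (lamD m n l * x * (lamD m n l)⁻¹) (sGen m n t) :=
  ((lamD_comm_sGen h).mul_left (Hx t (by omega))).mul_left (lamD_comm_sGen h).inv_left

lemma adj_step {G : Type*} [Group G] (s1 s2 A B : G)
    (hb : s1 * s2 * s1 = s2 * s1 * s2) (cA : Commute A s2) (cB : Commute B s2)
    (ihZ : Commute (s1 * A * s1⁻¹) B) :
    Commute ((s2 * s1) * A * (s2 * s1)⁻¹) (s1 * B * s1⁻¹) := by
  have c1 : Commute ((s2 * s1) * A * (s2 * s1)⁻¹) B := by
    have hsp : (s2 * s1) * A * (s2 * s1)⁻¹ = s2 * (s1 * A * s1⁻¹) * s2⁻¹ := by group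
    rw [hsp]; exact comm_conj_of cB ihZ
  have key : s1 * ((s2 * s1) * A * (s2 * s1)⁻¹) * s1⁻¹ = (s2 * s1) * A * (s2 * s1)⁻¹ := by
    calc s1 * ((s2 * s1) * A * (s2 * s1)⁻¹) * s1⁻¹
        = (s1 * s2 * s1) * A * (s1 * s2 * s1)⁻¹ := by group
      _ = (s2 * s1 * s2) * A * (s2 * s1 * s2)⁻¹ := by rw [hb]
      _ = (s2 * s1) * (s2 * A * s2⁻¹) * (s2 * s1)⁻¹ := by group
      _ = (s2 * s1) * A * (s2 * s1)⁻¹ := by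
          rw [show s2 * A * s2⁻¹ = A from by rw [← cA.eq]; group]
  have c2 : Commute s1 ((s2 * s1) * A * (s2 * s1)⁻¹) := mul_inv_eq_iff_eq_mul.mp key
  exact (c2.symm.mul_right c1).mul_right c2.symm.inv_right

lemma adj_comm (x y : MixedBraid m n)
    (Hx : ∀ j : ℕ, 2 ≤ j → Commute x (sGen m n j))
    (Hy : ∀ j : ℕ, 2 ≤ j → Commute y (sGen m n j))
    (H1 : Commute (sGen m n 1 * x * (sGen m n 1)⁻¹) y) :
    ∀ l : ℕ, l + 1 ≤ n - 1 →
      Commute (lamD m n (l + 1) * x * (lamD m n (l + 1))⁻¹)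
        (lamD m n l * y * (lamD m n l)⁻¹) := by
  intro l
  induction l with
  | zero =>
    intro _
    have e1 : lamD m n 1 = sGen m n 1 * lamD m n 0 := lamD_succ 0
    rw [e1, lamD_zero]
    have h' := H1
    simp only [mul_inv_rev, mul_assoc, mul_one, one_mul, inv_one] at h' ⊢
    exact h'
  | succ l IH =>
    intro hbound
    have hb : sGen m n (l + 1) * sGen m n (l + 2) * sGen m n (l + 1) =
        sGen m n (l + 2) * sGen m n (l + 1) * sGen m n (l + 2) :=
      braid_adj (by omega) (by omega)
    have cA : Commute (lamD m n l * x * (lamD m n l)⁻¹) (sGen m n (l + 2)) :=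
      conj_comm_sGen x Hx le_rfl
    have cB : Commute (lamD m n l * y * (lamD m n l)⁻¹) (sGen m n (l + 2)) :=
      conj_comm_sGen y Hy le_rfl
    have ihZ : Commute
        (sGen m n (l + 1) * (lamD m n l * x * (lamD m n l)⁻¹) * (sGen m n (l + 1))⁻¹)
        (lamD m n l * y * (lamD m n l)⁻¹) := by
      have h' := IH (by omega)
      rw [lamD_succ] at h'
      simp only [mul_inv_rev, mul_assoc] at h' ⊢
      exact h'
    have hstep := adj_step (sGen m n (l + 1)) (sGen m n (l + 2))
      (lamD m n l * x * (lamD m n l)⁻¹) (lamD m n l * y * (lamD m n l)⁻¹) hb cA cB ihZ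
    have e2 : lamD m n (l + 2) = sGen m n (l + 2) * lamD m n (l + 1) := lamD_succ (l + 1)
    rw [e2, lamD_succ]
    simp only [mul_inv_rev, mul_assoc] at hstep ⊢
    exact hstep

lemma gen_comm (x y : MixedBraid m n)
    (Hx : ∀ j : ℕ, 2 ≤ j → Commute x (sGen m n j))
    (Hy : ∀ j : ℕ, 2 ≤ j → Commute y (sGen m n j))
    (H1 : Commute (sGen m n 1 * x * (sGen m n 1)⁻¹) y) :
    ∀ p l : ℕ, l < p → p ≤ n - 1 →
      Commute (lamD m n p * x * (lamD m n p)⁻¹) (lamD m n l * y * (lamD m n l)⁻¹) := by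
  intro p
  induction p with
  | zero => intro l hl _; omega
  | succ t IH =>
    intro l hl hp
    rcases Nat.lt_succ_iff_lt_or_eq.mp hl with hlt | rfl
    · have hY : Commute (lamD m n l * y * (lamD m n l)⁻¹) (sGen m n (t + 1)) :=
        conj_comm_sGen y Hy (by omega)
      have ih := IH l hlt (by omega)
      have hstep := comm_conj_of hY ih
      rw [lamD_succ]
      simp only [mul_inv_rev, mul_assoc] at hstep ⊢
      exact hstep
    · exact adj_comm x y Hx Hy H1 l hp

end MixedLemmas
/-- Combing and cabling commute for a general `q`-strand cable: combing the cable
as a single thickened strand equals combing its strands one by one. -/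
theorem combing_cabling_commute_general (m n k q : ℕ) (hm : 2 ≤ m) (hn : 1 ≤ n)
    (hk1 : 1 ≤ k) (hk2 : k ≤ m - 1) (hq1 : 1 ≤ q) (hq2 : q ≤ n) :
    (((List.range q).map
        (fun l => lamD m n l * aGen m n (k + 1) * (lamD m n l)⁻¹)).prod)⁻¹ *
      ((List.range q).map
        (fun l => lamD m n l * aGen m n k * (lamD m n l)⁻¹)).prod *
      ((List.range q).map
        (fun l => lamD m n l * aGen m n (k + 1) * (lamD m n l)⁻¹)).prod =
    ((List.range q).map
      (fun l => lamD m n l *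
        ((aGen m n (k + 1))⁻¹ * aGen m n k * aGen m n (k + 1)) * (lamD m n l)⁻¹)).prod := by
  have hfun : (fun l => lamD m n l *
        ((aGen m n (k + 1))⁻¹ * aGen m n k * aGen m n (k + 1)) * (lamD m n l)⁻¹) =
      fun l => (lamD m n l * aGen m n (k + 1) * (lamD m n l)⁻¹)⁻¹ *
        (lamD m n l * aGen m n k * (lamD m n l)⁻¹) *
        (lamD m n l * aGen m n (k + 1) * (lamD m n l)⁻¹) := by
    funext l; group
  rw [hfun]
  have Hxa : ∀ j : ℕ, 2 ≤ j → Commute (aGen m n k) (sGen m n j) :=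
    fun j hj => aGen_sGen_comm k hj
  have Hxb : ∀ j : ℕ, 2 ≤ j → Commute (aGen m n (k + 1)) (sGen m n j) :=
    fun j hj => aGen_sGen_comm (k + 1) hj
  have Hy' : ∀ j : ℕ, 2 ≤ j →
      Commute ((aGen m n (k + 1))⁻¹ * aGen m n k * aGen m n (k + 1)) (sGen m n j) :=
    fun j hj => ((Hxb j hj).inv_left.mul_left (Hxa j hj)).mul_left (Hxb j hj)
  refine prod_conj q _ _ ?_ ?_
  · intro l p hlp hpq
    have hn2 : 2 ≤ n := by omega
    have H1 : Commute (sGen m n 1 * aGen m n k * (sGen m n 1)⁻¹) (aGen m n (k + 1)) :=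
      (r5_rel hk1 (Nat.lt_succ_self k) (by omega) hn2).symm
    exact gen_comm (aGen m n k) (aGen m n (k + 1)) Hxa Hxb H1 p l hlp (by omega)
  · intro l p hlp hpq
    have hn2 : 2 ≤ n := by omega
    have H2 : Commute (sGen m n 1 * aGen m n (k + 1) * (sGen m n 1)⁻¹)
        ((aGen m n (k + 1))⁻¹ * aGen m n k * aGen m n (k + 1)) := by
      refine key2 (aGen m n k) (aGen m n (k + 1)) (sGen m n 1) ?_ ?_
      · exact r4_rel (by omega) (by omega) hn2
      · exact (r5_rel hk1 (Nat.lt_succ_self k) (by omega) hn2).symm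
    have h := gen_comm (aGen m n (k + 1))
      ((aGen m n (k + 1))⁻¹ * aGen m n k * aGen m n (k + 1)) Hxb Hy' H2 p l hlp (by omega)
    have heq : lamD m n l * ((aGen m n (k + 1))⁻¹ * aGen m n k * aGen m n (k + 1)) *
        (lamD m n l)⁻¹ =
        (lamD m n l * aGen m n (k + 1) * (lamD m n l)⁻¹)⁻¹ *
        (lamD m n l * aGen m n k * (lamD m n l)⁻¹) *
        (lamD m n l * aGen m n (k + 1) * (lamD m n l)⁻¹) := by group
    rw [heq] at h
    exact h
end
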